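/- Fix N ≥ 2 and d ≥ max{31, 6N−17}. With x_i^N the i-th smallest element of S_d^N and y_i the i-th smallest element of T_{5,d}, for all i ≥ 3 one has x_{i+10}^N − y_{i+10} = (x_i^N − y_i) + (d − 5N + 15). -/

import Mathlib

/-- `rho A n` is the number of partitions of `n` all of whose parts lie in `A`. -/
noncomputable def rho (A : Set ℕ) (n : ℕ) : ℕ :=
  Nat.card {p : n.Partition // ∀ x ∈ p.parts, x ∈ A}

/-- `qpart a d n` is the number of partitions of `n` into parts that are all `≥ a`
and pairwise differ by at least `d` (so, in particular, are distinct when `d ≥ 1`). -/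
noncomputable def qpart (a d n : ℕ) : ℕ :=
  Nat.card {p : n.Partition //
    (∀ x ∈ p.parts, a ≤ x) ∧
    (∀ x ∈ p.parts, p.parts.count x ≤ 1) ∧
    (∀ x ∈ p.parts, ∀ y ∈ p.parts, x ≠ y → d ≤ max x y - min x y)}

/-- Positive integers congruent to `±a` modulo `m`, excluding `m - a`. -/
noncomputable def QminusSet (a m : ℕ) : Set ℕ :=
  {x | x % m = a % m ∨ x % m = (m - a) % m} \ {m - a}

/-- `Qminus a d n` counts partitions of `n` into parts `≡ ±a (mod d+3)`,
excluding the part `d+3-a`. -/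
noncomputable def Qminus (a d n : ℕ) : ℕ := rho (QminusSet a (d + 3)) n

/-- `Qmm a d n` counts partitions of `n` into parts `≡ ±a (mod d+3)`,
excluding both the parts `a` and `d+3-a`. -/
noncomputable def Qmm (a d n : ℕ) : ℕ := rho (QminusSet a (d + 3) \ {a}) n

/-- `Tset s d` is the set of naturals congruent to `1` or to `d + 2^j` for some
`1 ≤ j ≤ s - 1` modulo `2d`. -/
def Tset (s d : ℕ) : Set ℕ :=
  {y | y % (2 * d) = 1 % (2 * d) ∨
    ∃ j, 1 ≤ j ∧ j + 1 ≤ s ∧ y % (2 * d) = (d + 2 ^ j) % (2 * d)}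

/-- `T5 d` : naturals congruent to `1, d+2, d+4, d+8` or `d+16` modulo `2d`. -/
def T5 (d : ℕ) : Set ℕ := Tset 5 d

/-- `Sset d N` : naturals congruent to `±1` modulo `d-N+3`, excluding `d-N+2`. -/
def Sset (d N : ℕ) : Set ℕ :=
  {x | x % (d - N + 3) = 1 % (d - N + 3) ∨ x % (d - N + 3) = (d - N + 2) % (d - N + 3)}
    \ {d - N + 2}

/-- `xN d N i` is the `i`-th smallest element of `Sset d N` (1-indexed). -/
noncomputable def xN (d N i : ℕ) : ℕ := Nat.nth (· ∈ Sset d N) (i - 1)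

/-- `yT d i` is the `i`-th smallest element of `T5 d` (1-indexed). -/
noncomputable def yT (d i : ℕ) : ℕ := Nat.nth (· ∈ T5 d) (i - 1)



lemma nth_eq_of_strictMono {p : ℕ → Prop} {f : ℕ → ℕ} (hf : StrictMono f)
    (hr : Set.range f = setOf p) : Nat.nth p = f := by
  have hinf : (setOf p).Infinite := hr ▸ Set.infinite_range_of_injective hf.injective
  exact ((Nat.nth_strictMono hinf).range_inj hf).1
    ((Nat.range_nth_of_infinite hinf).trans hr.symm)

noncomputable def fS (m n : ℕ) : ℕ :=
  ((n + 1) / 2) * m + (if n = 0 ∨ n % 2 = 1 then 1 else m - 1)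

lemma fS_zero (m : ℕ) : fS m 0 = 1 := by simp [fS]

lemma fS_odd (m k : ℕ) : fS m (2 * k + 1) = (k + 1) * m + 1 := by
  unfold fS
  rw [show (2 * k + 1 + 1) / 2 = k + 1 by omega, if_pos (by omega)]

lemma fS_even (m k : ℕ) : fS m (2 * k + 2) = (k + 1) * m + (m - 1) := by
  unfold fS
  rw [show (2 * k + 2 + 1) / 2 = k + 1 by omega, if_neg (by omega)]

lemma fS_mono (m : ℕ) (hm : 3 ≤ m) : StrictMono (fS m) := by
  apply strictMono_nat_of_lt_succ
  intro n
  rcases Nat.even_or_odd n with ⟨k, rfl⟩ | ⟨k, rfl⟩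
  · rcases k with _ | j
    · rw [show (0:ℕ) + 0 = 0 from rfl, fS_zero, show (0:ℕ) + 0 + 1 = 2*0+1 from rfl, fS_odd]
      have : 1 * m = m := one_mul m
      omega
    · rw [show j + 1 + (j + 1) = 2 * j + 2 by ring, fS_even,
        show 2 * j + 2 + 1 = 2 * (j + 1) + 1 by ring, fS_odd,
        show (j + 2) * m = (j + 1) * m + m by ring]
      generalize (j + 1) * m = A
      omega
  · rw [fS_odd, show 2 * k + 1 + 1 = 2 * k + 2 by ring, fS_even]
    generalize (k + 1) * m = A
    omega

lemma fS_range (d N m : ℕ) (hm : 3 ≤ m) (hmdef : m = d - N + 3) :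
    Set.range (fS m) = {x | x ∈ Sset d N} := by
  have h1 : (1 : ℕ) % m = 1 := Nat.mod_eq_of_lt (by omega)
  have h2 : (m - 1) % m = m - 1 := Nat.mod_eq_of_lt (by omega)
  have hdn : d - N + 2 = m - 1 := by omega
  ext x
  simp only [Set.mem_range, Set.mem_setOf_eq, Sset, Set.mem_diff, Set.mem_setOf_eq,
    Set.mem_singleton_iff, hdn, ← hmdef, h1, h2]
  constructor
  · rintro ⟨n, rfl⟩
    rcases Nat.even_or_odd n with ⟨k, rfl⟩ | ⟨k, rfl⟩
    · rcases k with _ | j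
      · rw [show (0:ℕ) + 0 = 0 from rfl, fS_zero]
        exact ⟨Or.inl h1, by omega⟩
      · rw [show j + 1 + (j + 1) = 2 * j + 2 by ring, fS_even]
        have hx : ((j + 1) * m + (m - 1)) % m = m - 1 := by
          rw [Nat.add_comm, Nat.add_mul_mod_self_right, h2]
        have hge : m ≤ (j + 1) * m := Nat.le_mul_of_pos_left m (by omega)
        exact ⟨Or.inr hx, by omega⟩
    · rw [fS_odd]
      have hx : ((k + 1) * m + 1) % m = 1 := by
        rw [Nat.add_comm, Nat.add_mul_mod_self_right, h1]
      have hge : m ≤ (k + 1) * m := Nat.le_mul_of_pos_left m (by omega)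
      exact ⟨Or.inl hx, by omega⟩
  · rintro ⟨hmod, hne⟩
    have hdm := Nat.div_add_mod x m
    rcases hmod with hmod | hmod
    · rcases Nat.eq_zero_or_pos (x / m) with hq | hq
      · refine ⟨0, ?_⟩
        rw [fS_zero]
        rw [hq, Nat.mul_zero, Nat.zero_add, hmod] at hdm
        omega
      · refine ⟨2 * (x / m - 1) + 1, ?_⟩
        rw [fS_odd, show x / m - 1 + 1 = x / m by omega, Nat.mul_comm (x / m) m, ← hmod]
        exact hdm
    · have hq : 1 ≤ x / m := by
        by_contra hq
        apply hne
        have h0 : x / m = 0 := Nat.eq_zero_of_not_pos hq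
        rw [h0, Nat.mul_zero, Nat.zero_add, hmod] at hdm
        omega
      refine ⟨2 * (x / m - 1) + 2, ?_⟩
      rw [fS_even, show x / m - 1 + 1 = x / m by omega, Nat.mul_comm (x / m) m, ← hmod]
      exact hdm

noncomputable def gT (d n : ℕ) : ℕ :=
  2 * d * (n / 5) +
    (if n % 5 = 0 then 1 else if n % 5 = 1 then d + 2 else if n % 5 = 2 then d + 4
      else if n % 5 = 3 then d + 8 else d + 16)

lemma gT_mono (d : ℕ) (hd : 31 ≤ d) : StrictMono (gT d) := by
  apply strictMono_nat_of_lt_succ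
  intro n
  obtain ⟨q, r, hr, rfl⟩ : ∃ q r, r < 5 ∧ n = 5 * q + r := ⟨n / 5, n % 5, by omega, by omega⟩
  unfold gT
  interval_cases r <;>
    [ (rw [show (5*q+0)/5 = q by omega, show (5*q+0)%5 = 0 by omega,
         show (5*q+0+1)/5 = q by omega, show (5*q+0+1)%5 = 1 by omega]);
      (rw [show (5*q+1)/5 = q by omega, show (5*q+1)%5 = 1 by omega,
         show (5*q+1+1)/5 = q by omega, show (5*q+1+1)%5 = 2 by omega]);
      (rw [show (5*q+2)/5 = q by omega, show (5*q+2)%5 = 2 by omega,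
         show (5*q+2+1)/5 = q by omega, show (5*q+2+1)%5 = 3 by omega]);
      (rw [show (5*q+3)/5 = q by omega, show (5*q+3)%5 = 3 by omega,
         show (5*q+3+1)/5 = q by omega, show (5*q+3+1)%5 = 4 by omega]);
      (rw [show (5*q+4)/5 = q by omega, show (5*q+4)%5 = 4 by omega,
         show (5*q+4+1)/5 = q+1 by omega, show (5*q+4+1)%5 = 0 by omega,
         show 2*d*(q+1) = 2*d*q + 2*d by ring])] <;>
    norm_num <;> generalize 2 * d * q = A <;> omega

lemma gT_range (d : ℕ) (hd : 31 ≤ d) : Set.range (gT d) = {x | x ∈ T5 d} := by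
  have h2d : 17 ≤ 2 * d := by omega
  have e1 : (1 : ℕ) % (2 * d) = 1 := Nat.mod_eq_of_lt (by omega)
  have e2 : (d + 2) % (2 * d) = d + 2 := Nat.mod_eq_of_lt (by omega)
  have e4 : (d + 4) % (2 * d) = d + 4 := Nat.mod_eq_of_lt (by omega)
  have e8 : (d + 8) % (2 * d) = d + 8 := Nat.mod_eq_of_lt (by omega)
  have e16 : (d + 16) % (2 * d) = d + 16 := Nat.mod_eq_of_lt (by omega)
  ext x
  simp only [Set.mem_range, Set.mem_setOf_eq, T5, Tset]
  constructor
  · rintro ⟨n, rfl⟩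
    unfold gT
    obtain ⟨q, r, hr, rfl⟩ : ∃ q r, r < 5 ∧ n = 5 * q + r := ⟨n / 5, n % 5, by omega, by omega⟩
    rw [show (5*q+r)/5 = q by omega, show (5*q+r)%5 = r by omega]
    interval_cases r
    · norm_num
    · norm_num
      right
      exact ⟨1, by norm_num, by norm_num, by norm_num⟩
    · norm_num
      right
      exact ⟨2, by norm_num, by norm_num, by norm_num⟩
    · norm_num
      right
      exact ⟨3, by norm_num, by norm_num, by norm_num⟩
    · norm_num
      right
      exact ⟨4, by norm_num, by norm_num, by norm_num⟩
  · intro hx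
    have hdm := Nat.div_add_mod x (2 * d)
    have hres : x % (2*d) = 1 ∨ x % (2*d) = d + 2 ∨ x % (2*d) = d + 4 ∨
        x % (2*d) = d + 8 ∨ x % (2*d) = d + 16 := by
      rcases hx with h | ⟨j, hj1, hj5, hj⟩
      · left; rw [h, e1]
      · have hj4 : j ≤ 4 := by omega
        interval_cases j
        · right; left; rw [hj]; norm_num [e2]
        · right; right; left; rw [hj]; norm_num [e4]
        · right; right; right; left; rw [hj]; norm_num [e8]
        · right; right; right; right; rw [hj]; norm_num [e16]
    set q := x / (2 * d) with hq
    have key : ∀ j, j < 5 → gT d (5 * q + j) = 2 * d * q +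
        (if j = 0 then 1 else if j = 1 then d + 2 else if j = 2 then d + 4
          else if j = 3 then d + 8 else d + 16) := by
      intro j hj
      unfold gT
      rw [show (5*q+j)/5 = q by omega, show (5*q+j)%5 = j by omega]
    rcases hres with h | h | h | h | h
    · refine ⟨5 * q + 0, ?_⟩
      have hk := key 0 (by omega)
      norm_num at hk ⊢
      rw [hk, ← h]
      exact hdm
    · refine ⟨5 * q + 1, ?_⟩
      have hk := key 1 (by omega)
      norm_num at hk
      rw [hk, ← h]
      exact hdm
    · refine ⟨5 * q + 2, ?_⟩
      have hk := key 2 (by omega)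
      norm_num at hk
      rw [hk, ← h]
      exact hdm
    · refine ⟨5 * q + 3, ?_⟩
      have hk := key 3 (by omega)
      norm_num at hk
      rw [hk, ← h]
      exact hdm
    · refine ⟨5 * q + 4, ?_⟩
      have hk := key 4 (by omega)
      norm_num at hk
      rw [hk, ← h]
      exact hdm

lemma fS_shift (m n : ℕ) : fS m (n + 12) = fS m (n + 2) + 5 * m := by
  rcases Nat.even_or_odd n with ⟨k, rfl⟩ | ⟨k, rfl⟩
  · rw [show k + k + 12 = 2 * (k + 5) + 2 by ring, show k + k + 2 = 2 * k + 2 by ring,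
      fS_even, fS_even]
    ring_nf
  · rw [show 2 * k + 1 + 12 = 2 * (k + 6) + 1 by ring,
      show 2 * k + 1 + 2 = 2 * (k + 1) + 1 by ring, fS_odd, fS_odd]
    ring

lemma gT_shift (d n : ℕ) : gT d (n + 12) = gT d (n + 2) + 4 * d := by
  unfold gT
  rw [show (n + 12) / 5 = (n + 2) / 5 + 2 by omega, show (n + 12) % 5 = (n + 2) % 5 by omega]
  ring

theorem stmt4 (N d : ℕ) (hN : 2 ≤ N) (hd : max 31 (6 * N - 17) ≤ d) :
    ∀ i, 3 ≤ i →
      (xN d N (i + 10) : ℤ) - (yT d (i + 10) : ℤ)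
        = ((xN d N i : ℤ) - (yT d i : ℤ)) + ((d : ℤ) - 5 * N + 15) := by
  rw [max_le_iff] at hd
  obtain ⟨hd31, hdN⟩ := hd
  intro i hi
  obtain ⟨n, rfl⟩ : ∃ n, i = n + 3 := ⟨i - 3, by omega⟩
  set m := d - N + 3 with hmdef
  have hm : 26 ≤ m := by omega
  have hS : Nat.nth (· ∈ Sset d N) = fS m :=
    nth_eq_of_strictMono (fS_mono m (by omega)) (fS_range d N m (by omega) hmdef)
  have hT : Nat.nth (· ∈ T5 d) = gT d :=
    nth_eq_of_strictMono (gT_mono d hd31) (gT_range d hd31)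
  have hx : xN d N (n + 3 + 10) = fS m (n + 12) := by
    rw [xN, hS]; congr 1 <;> omega
  have hx2 : xN d N (n + 3) = fS m (n + 2) := by
    rw [xN, hS]; congr 1 <;> omega
  have hy : yT d (n + 3 + 10) = gT d (n + 12) := by
    rw [yT, hT]; congr 1 <;> omega
  have hy2 : yT d (n + 3) = gT d (n + 2) := by
    rw [yT, hT]; congr 1 <;> omega
  rw [hx, hx2, hy, hy2, fS_shift, gT_shift]
  have hcast : (m : ℤ) = (d : ℤ) - (N : ℤ) + 3 := by
    rw [hmdef]; push_cast [Nat.cast_sub (show N ≤ d by omega)]; ring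
  have hsub : ((d - N : ℕ) : ℤ) = (d : ℤ) - (N : ℤ) := Nat.cast_sub (by omega)
  push_cast
  linarith [hcast, hsub]
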